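/- For all positive integers m ≤ n, ∑_{k=m}^n C(k+m,2m)·(2m+1 − m(m+1)(2k+1)/(k(k+1))) = ((n−m)(n+m+1)/(n+1))·C(n+m,2m). -/

import Mathlib

open Finset

theorem binom_sum_identity (m n : ℕ) (hm : 1 ≤ m) (hmn : m ≤ n) :
    ∑ k ∈ Icc m n, ((k + m).choose (2 * m) : ℚ) *
        ((2 * m + 1 : ℚ) - (m : ℚ) * (m + 1) * (2 * k + 1) / ((k : ℚ) * (k + 1))) =
    ((n : ℚ) - m) * ((n : ℚ) + m + 1) / ((n : ℚ) + 1) * ((n + m).choose (2 * m) : ℚ) := by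
  induction n, hmn using Nat.le_induction with
  | base =>
      rw [Icc_self, Finset.sum_singleton]
      have h2 : m + m = 2 * m := by ring
      rw [h2, Nat.choose_self]
      have hm0 : (m : ℚ) ≠ 0 := by positivity
      have hm1 : (m : ℚ) + 1 ≠ 0 := by positivity
      field_simp
      ring
  | succ n hn ih =>
      rw [Finset.sum_Icc_succ_top (le_trans hn (Nat.le_succ n)), ih]
      have key : ((n + 1 + m).choose (2 * m) : ℚ) * ((n : ℚ) + 1 - m) =
          ((n + m).choose (2 * m) : ℚ) * ((n : ℚ) + 1 + m) := by
        have := Nat.choose_mul_succ_eq (n + m) (2 * m)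
        have hsub : n + m + 1 - 2 * m = n + 1 - m := by omega
        rw [hsub] at this
        have h1 : n + 1 + m = n + m + 1 := by ring
        rw [h1]
        have hcast : ((n + 1 - m : ℕ) : ℚ) = (n : ℚ) + 1 - m := by
          push_cast [Nat.cast_sub (le_trans hn (Nat.le_succ n))]; ring
        calc ((n + m + 1).choose (2 * m) : ℚ) * ((n : ℚ) + 1 - m)
            = (((n + m + 1).choose (2 * m) * (n + 1 - m) : ℕ) : ℚ) := by
              push_cast [hcast]; ring
          _ = (((n + m).choose (2 * m) * (n + m + 1) : ℕ) : ℚ) := by rw [← this]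
          _ = ((n + m).choose (2 * m) : ℚ) * ((n : ℚ) + 1 + m) := by push_cast; ring
      have hnm : (n : ℚ) + 1 - m ≠ 0 := by
        have : (m : ℚ) ≤ n := by exact_mod_cast hn
        linarith
      have hC' : ((n + 1 + m).choose (2 * m) : ℚ) =
          ((n + m).choose (2 * m) : ℚ) * ((n : ℚ) + 1 + m) / ((n : ℚ) + 1 - m) := by
        field_simp
        linarith [key]
      rw [hC']
      have h1 : (n : ℚ) + 1 ≠ 0 := by positivity
      have h2 : (n : ℚ) + 2 ≠ 0 := by positivity
      push_cast
      field_simp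
      ring
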